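/- Let M be a set of continuous linear operators from X to Y for which there exists C > 0 such that for every finite choice x₁,...,xₙ ∈ X and T₁,...,Tₙ ∈ M there is an operator T ∈ Π_p(X,Y) with π_p(T) ≤ C and ‖Tᵢ(xᵢ)‖ ≤ ‖T(xᵢ)‖ for each i. Then M is uniformly dominated, i.e., there is a single positive finite Borel measure μ on B_{X*} such that ‖T(x)‖^p ≤ ∫_{B_{X*}} |φ(x)|^p dμ(φ) for all T ∈ M and x ∈ X. -/

import Mathlib

open MeasureTheory

open Set
open scoped ENNReal NNReal
set_option linter.unusedSectionVars false
set_option maxHeartbeats 1000000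

noncomputable section

variable {X : Type*} [NormedAddCommGroup X] [NormedSpace ℝ X] [CompleteSpace X]
variable {Y : Type*} [NormedAddCommGroup Y] [NormedSpace ℝ Y] [CompleteSpace Y]

/-- The closed unit ball of the dual of `X`, with the weak-star topology. -/
def dualBall (X : Type*) [NormedAddCommGroup X] [NormedSpace ℝ X] : Set (WeakDual ℝ X) :=
  {φ | ∀ x : X, ‖φ x‖ ≤ ‖x‖}

instance (X : Type*) [NormedAddCommGroup X] [NormedSpace ℝ X] :
    MeasurableSpace (dualBall X) := borel _

instance (X : Type*) [NormedAddCommGroup X] [NormedSpace ℝ X] :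
    BorelSpace (dualBall X) := ⟨rfl⟩

/-- `T` satisfies the absolutely `p`-summing inequality with constant `C`. -/
def SummingWith (p : ℝ) (T : X →L[ℝ] Y) (C : ℝ) : Prop :=
  ∀ (m : ℕ) (x : Fin m → X),
    (∑ i, ‖T (x i)‖ ^ p) ^ (1 / p) ≤
      C * ⨆ φ : dualBall X, (∑ i, ‖(φ : WeakDual ℝ X) (x i)‖ ^ p) ^ (1 / p)

/-- `T` is absolutely `p`-summing. -/
def AbsolutelySumming (p : ℝ) (T : X →L[ℝ] Y) : Prop :=
  ∃ C : ℝ, 0 ≤ C ∧ SummingWith p T C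

/-- The absolutely `p`-summing norm `π_p(T)`. -/
def piNorm (p : ℝ) (T : X →L[ℝ] Y) : ℝ :=
  sInf {C : ℝ | 0 ≤ C ∧ SummingWith p T C}

/-- `M` is uniformly dominated by the measure `μ` on the dual unit ball. -/
def UniformlyDominatedBy (p : ℝ) (M : Set (X →L[ℝ] Y)) (μ : Measure (dualBall X)) : Prop :=
  ∀ T ∈ M, ∀ x : X, ‖T x‖ ^ p ≤ ∫ φ : dualBall X, ‖(φ : WeakDual ℝ X) x‖ ^ p ∂μ


namespace Stmt5Aux

variable {K : Type*} [TopologicalSpace K] [CompactSpace K] [T2Space K] [Nonempty K]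

lemma sum_clamp_of_ge {δ : ℝ} (hδ : 0 < δ) {v : ℝ} (N : ℕ) (h : (N : ℝ) * δ ≤ v) :
    ∑ k ∈ Finset.range N, min δ (max 0 (v - k * δ)) = N * δ := by
  rw [Finset.sum_congr rfl (fun k hk => ?_), Finset.sum_const, Finset.card_range,
    nsmul_eq_mul]
  have hk' : (k : ℝ) + 1 ≤ N := by
    have := Finset.mem_range.mp hk; exact_mod_cast this
  have h1 : δ ≤ v - k * δ := by nlinarith
  rw [max_eq_right (le_trans hδ.le h1), min_eq_left h1]

lemma sum_clamp_eq {δ : ℝ} (hδ : 0 < δ) (N : ℕ) {v : ℝ} (h0 : 0 ≤ v) (hN : v ≤ N * δ) :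
    ∑ k ∈ Finset.range N, min δ (max 0 (v - k * δ)) = v := by
  induction N with
  | zero => simp at hN ⊢; linarith
  | succ N ih =>
    rw [Finset.sum_range_succ]
    rcases le_or_gt v ((N : ℝ) * δ) with hv | hv
    · rw [ih hv]
      have : v - N * δ ≤ 0 := by linarith
      rw [max_eq_left this, min_eq_right hδ.le, add_zero]
    · rw [sum_clamp_of_ge hδ N hv.le]
      have h1 : v - N * δ ≤ δ := by push_cast at hN ⊢; linarith
      have h2 : (0:ℝ) ≤ v - N * δ := by linarith
      rw [max_eq_right h2, min_eq_right h1]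
      ring

lemma count_le {δ : ℝ} (hδ : 0 < δ) {c : ℝ} (hc : 0 ≤ c) (M : ℕ) :
    δ * ∑ m ∈ Finset.range M, (if (m : ℝ) * δ < c then (1 : ℝ) else 0) ≤ c + δ := by
  have hsum : ∑ m ∈ Finset.range M, (if (m : ℝ) * δ < c then (1 : ℝ) else 0)
      = ((Finset.range M).filter (fun m : ℕ => (m : ℝ) * δ < c)).card := by
    rw [Finset.sum_boole]
  rw [hsum]
  have hsub : (Finset.range M).filter (fun m : ℕ => (m : ℝ) * δ < c) ⊆
      Finset.range (⌊c / δ⌋₊ + 1) := by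
    intro m hm
    obtain ⟨-, hm⟩ := Finset.mem_filter.mp hm
    rw [Finset.mem_range, Nat.lt_succ_iff]
    exact Nat.le_floor (by rw [le_div_iff₀ hδ]; exact hm.le)
  have hcard := Finset.card_le_card hsub
  rw [Finset.card_range] at hcard
  have h1 : (((Finset.range M).filter (fun m : ℕ => (m : ℝ) * δ < c)).card : ℝ)
      ≤ (⌊c / δ⌋₊ : ℝ) + 1 := by exact_mod_cast hcard
  have h2 : (⌊c / δ⌋₊ : ℝ) ≤ c / δ := Nat.floor_le (div_nonneg hc hδ.le)
  calc δ * _ ≤ δ * ((c / δ) + 1) := by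
        refine mul_le_mul_of_nonneg_left (h1.trans (by linarith)) hδ.le
    _ = c + δ := by field_simp

/-- Test functions for the Riesz content of `F`. -/
private def testSet (F : Set K) : Set C(K, ℝ) :=
  {f : C(K, ℝ) | (∀ φ, 0 ≤ f φ) ∧ ∀ φ ∈ F, 1 ≤ f φ}

variable (Λ : C(K, ℝ) →ₗ[ℝ] ℝ)

/-- The Riesz content of a set. -/
private def lam (F : Set K) : ℝ := sInf (Λ '' testSet F)

lemma one_mem_testSet (F : Set K) : (1 : C(K, ℝ)) ∈ testSet F :=
  ⟨fun _ => zero_le_one, fun _ _ => le_refl _⟩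

lemma testSet_nonempty (F : Set K) : (Λ '' testSet F).Nonempty :=
  ⟨Λ 1, ⟨1, one_mem_testSet F, rfl⟩⟩

variable (hpos : ∀ f : C(K, ℝ), (∀ φ, 0 ≤ f φ) → 0 ≤ Λ f)

include hpos

lemma lam_bddBelow (F : Set K) : BddBelow (Λ '' testSet F) := by
  refine ⟨0, ?_⟩
  rintro r ⟨f, hf, rfl⟩
  exact hpos f hf.1

lemma lam_nonneg (F : Set K) : 0 ≤ lam Λ F :=
  le_csInf (testSet_nonempty Λ F) (by rintro r ⟨f, hf, rfl⟩; exact hpos f hf.1)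

lemma lam_le {F : Set K} {f : C(K, ℝ)} (hf : f ∈ testSet F) : lam Λ F ≤ Λ f :=
  csInf_le (lam_bddBelow Λ hpos F) ⟨f, hf, rfl⟩

lemma lam_mono {F F' : Set K} (h : F ⊆ F') : lam Λ F ≤ lam Λ F' :=
  csInf_le_csInf (lam_bddBelow Λ hpos F) (testSet_nonempty Λ F')
    (Set.image_mono fun f hf => ⟨hf.1, fun φ hφ => hf.2 φ (h hφ)⟩)

lemma Λ_mono {f g : C(K, ℝ)} (h : ∀ φ, f φ ≤ g φ) : Λ f ≤ Λ g := by
  have := hpos (g - f) (fun φ => by simpa using h φ)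
  rw [map_sub] at this; linarith

/-- Key lemma: if `0 ≤ h ≤ 1` and `h` vanishes outside `F` then `Λ h ≤ lam F`. -/
lemma Λ_le_lam {F : Set K} {h : C(K, ℝ)} (h0 : ∀ φ, 0 ≤ h φ) (h1 : ∀ φ, h φ ≤ 1)
    (hsupp : ∀ φ, h φ ≠ 0 → φ ∈ F) : Λ h ≤ lam Λ F := by
  refine le_csInf (testSet_nonempty Λ F) ?_
  rintro r ⟨g, hg, rfl⟩
  refine Λ_mono Λ hpos fun φ => ?_
  by_cases hφ : h φ = 0
  · rw [hφ]; exact hg.1 φ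
  · exact (h1 φ).trans (hg.2 φ (hsupp φ hφ))

lemma exists_test_lt {F : Set K} {ε : ℝ} (hε : 0 < ε) :
    ∃ f ∈ testSet F, Λ f < lam Λ F + ε := by
  obtain ⟨r, ⟨f, hf, rfl⟩, hr⟩ :=
    exists_lt_of_csInf_lt (testSet_nonempty Λ F) (lt_add_of_pos_right (lam Λ F) hε)
  exact ⟨f, hf, hr⟩

lemma lam_union_le (F₁ F₂ : Set K) : lam Λ (F₁ ∪ F₂) ≤ lam Λ F₁ + lam Λ F₂ := by
  refine le_of_forall_pos_le_add fun ε hε => ?_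
  obtain ⟨f₁, hf₁, hΛ₁⟩ := exists_test_lt Λ hpos (F := F₁) (half_pos hε)
  obtain ⟨f₂, hf₂, hΛ₂⟩ := exists_test_lt Λ hpos (F := F₂) (half_pos hε)
  have : f₁ + f₂ ∈ testSet (F₁ ∪ F₂) := by
    constructor
    · intro φ; simpa using add_nonneg (hf₁.1 φ) (hf₂.1 φ)
    · rintro φ (hφ | hφ)
      · simpa using le_add_of_le_of_nonneg (hf₁.2 φ hφ) (hf₂.1 φ)
      · simpa using le_add_of_nonneg_of_le (hf₁.1 φ) (hf₂.2 φ hφ)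
  calc lam Λ (F₁ ∪ F₂) ≤ Λ (f₁ + f₂) := lam_le Λ hpos this
    _ = Λ f₁ + Λ f₂ := map_add _ _ _
    _ ≤ lam Λ F₁ + ε / 2 + (lam Λ F₂ + ε / 2) := by linarith
    _ = lam Λ F₁ + lam Λ F₂ + ε := by ring

lemma add_le_lam_union {F₁ F₂ : Set K} (h₁ : IsClosed F₁) (h₂ : IsClosed F₂)
    (hd : Disjoint F₁ F₂) : lam Λ F₁ + lam Λ F₂ ≤ lam Λ (F₁ ∪ F₂) := by
  obtain ⟨u, hu0, hu1, hu01⟩ := exists_continuous_zero_one_of_isClosed h₁ h₂ hd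
  refine le_csInf (testSet_nonempty Λ _) ?_
  rintro r ⟨g, hg, rfl⟩
  have key : lam Λ F₁ ≤ Λ (g * (1 - u)) ∧ lam Λ F₂ ≤ Λ (g * u) := by
    constructor
    · refine lam_le Λ hpos ⟨fun φ => ?_, fun φ hφ => ?_⟩
      · have := (hu01 φ).2; have := hg.1 φ
        simp only [ContinuousMap.mul_apply, ContinuousMap.sub_apply, ContinuousMap.one_apply]
        nlinarith
      · have h0 : u φ = 0 := hu0 hφ
        have := hg.2 φ (Or.inl hφ)
        simp only [ContinuousMap.mul_apply, ContinuousMap.sub_apply, ContinuousMap.one_apply, h0]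
        linarith
    · refine lam_le Λ hpos ⟨fun φ => ?_, fun φ hφ => ?_⟩
      · exact mul_nonneg (hg.1 φ) (hu01 φ).1
      · have h0 : u φ = 1 := by have := hu1 hφ; simpa using this
        have := hg.2 φ (Or.inr hφ)
        simp only [ContinuousMap.mul_apply, h0, mul_one]
        linarith
  have : Λ (g * (1 - u)) + Λ (g * u) = Λ g := by
    rw [← map_add]
    congr 1
    ext φ
    simp only [ContinuousMap.add_apply, ContinuousMap.mul_apply, ContinuousMap.sub_apply,
      ContinuousMap.one_apply]
    ring
  linarith [key.1, key.2]


/-- The Riesz content associated to a positive functional `Λ`. -/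
private def rieszCont (hpos : ∀ f : C(K, ℝ), (∀ φ, 0 ≤ f φ) → 0 ≤ Λ f) : Content K where
  toFun Kc := (lam Λ (Kc : Set K)).toNNReal
  mono' K₁ K₂ h := Real.toNNReal_mono (lam_mono Λ hpos h)
  sup_disjoint' K₁ K₂ hd _ _ := by
    have h1 := add_le_lam_union Λ hpos (F₁ := K₁) (F₂ := K₂) K₁.isCompact.isClosed
      K₂.isCompact.isClosed hd
    have h2 := lam_union_le Λ hpos (K₁ : Set K) K₂
    have he : lam Λ ((K₁ ⊔ K₂ : TopologicalSpace.Compacts K) : Set K)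
        = lam Λ K₁ + lam Λ K₂ := by
      have : ((K₁ ⊔ K₂ : TopologicalSpace.Compacts K) : Set K) = (K₁ : Set K) ∪ K₂ := rfl
      rw [this]; linarith
    rw [he, Real.toNNReal_add (lam_nonneg Λ hpos _) (lam_nonneg Λ hpos _)]
  sup_le' K₁ K₂ := by
    have h2 := lam_union_le Λ hpos (K₁ : Set K) K₂
    have : ((K₁ ⊔ K₂ : TopologicalSpace.Compacts K) : Set K) = (K₁ : Set K) ∪ K₂ := rfl
    rw [← Real.toNNReal_add (lam_nonneg Λ hpos _) (lam_nonneg Λ hpos _)]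
    exact Real.toNNReal_mono (by rw [this]; exact h2)

variable [MeasurableSpace K] [BorelSpace K]

/-- The measure associated to a positive functional `Λ`. -/
private def rieszMeas (hpos : ∀ f : C(K, ℝ), (∀ φ, 0 ≤ f φ) → 0 ≤ Λ f) : Measure K :=
  (rieszCont Λ hpos).measure

lemma rieszMeas_open_le {U : Set K} (hU : IsOpen U) :
    rieszMeas Λ hpos U ≤ ENNReal.ofReal (Λ 1) := by
  rw [rieszMeas, Content.measure_apply _ hU.measurableSet,
    Content.outerMeasure_of_isOpen _ U hU]
  refine iSup_le fun Kc => iSup_le fun _ => ?_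
  have : ((rieszCont Λ hpos) Kc : ℝ≥0∞) = ENNReal.ofReal (lam Λ (Kc : Set K)) := by
    simp [rieszCont, Content.mk_apply, ENNReal.ofReal]
  rw [this]
  exact ENNReal.ofReal_le_ofReal (lam_le Λ hpos (one_mem_testSet _))

lemma rieszMeas_finite : IsFiniteMeasure (rieszMeas Λ hpos) :=
  ⟨lt_of_le_of_lt (rieszMeas_open_le Λ hpos isOpen_univ) ENNReal.ofReal_lt_top⟩

lemma ofReal_lam_le_rieszMeas {F U : Set K} (hF : IsClosed F) (hU : IsOpen U) (hFU : F ⊆ U) :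
    ENNReal.ofReal (lam Λ F) ≤ rieszMeas Λ hpos U := by
  rw [rieszMeas, Content.measure_apply _ hU.measurableSet,
    Content.outerMeasure_of_isOpen _ U hU]
  have := (rieszCont Λ hpos).le_innerContent ⟨F, hF.isCompact⟩ ⟨U, hU⟩ hFU
  exact le_trans (le_of_eq (by simp [rieszCont, ENNReal.ofReal])) this

theorem Λ_le_integral (f : C(K, ℝ)) (hf : ∀ φ, 0 ≤ f φ) :
    Λ f ≤ ∫ φ, f φ ∂(rieszMeas Λ hpos) := by
  haveI := rieszMeas_finite Λ hpos
  set μ := rieszMeas Λ hpos with hμ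
  set m : ℝ := (μ univ).toReal with hm
  have hm0 : 0 ≤ m := ENNReal.toReal_nonneg
  -- reduce to an ε-statement
  have key : ∀ δ : ℝ, 0 < δ → Λ f ≤ (∫ φ, f φ ∂μ) + δ * (2 * m + 1) := by
    intro δ hδ
    -- the layer functions
    set M : ℕ := ⌊‖f‖ / δ⌋₊ + 1 with hM
    have hfN : ∀ φ, f φ ≤ (M : ℝ) * δ := by
      intro φ
      have h1 : f φ ≤ ‖f‖ := (le_abs_self _).trans (f.norm_coe_le_norm φ)
      have h2 : ‖f‖ / δ ≤ (M : ℝ) := by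
        push_cast [hM]
        linarith [Nat.lt_floor_add_one (‖f‖ / δ)]
      calc f φ ≤ ‖f‖ := h1
        _ = ‖f‖ / δ * δ := by field_simp
        _ ≤ (M : ℝ) * δ := by nlinarith
    set g : ℕ → C(K, ℝ) := fun k =>
      ⟨fun φ => min δ (max 0 (f φ - (k : ℝ) * δ)),
        continuous_const.min (continuous_const.max ((map_continuous f).sub continuous_const))⟩
      with hg
    have hf_eq : f = ∑ k ∈ Finset.range M, g k := by
      ext φ
      rw [ContinuousMap.coe_sum, Finset.sum_apply]
      exact (sum_clamp_eq hδ M (hf φ) (hfN φ)).symm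
    -- bound each Λ (g k)
    have hgk : ∀ k : ℕ, Λ (g k) ≤ δ * (μ {φ | ((k : ℝ) - 1) * δ < f φ}).toReal := by
      intro k
      have hUopen : IsOpen {φ | ((k : ℝ) - 1) * δ < f φ} :=
        isOpen_lt continuous_const (map_continuous f)
      have hFclosed : IsClosed {φ | (k : ℝ) * δ ≤ f φ} :=
        isClosed_le continuous_const (map_continuous f)
      have hFU : {φ : K | (k : ℝ) * δ ≤ f φ} ⊆ {φ | ((k : ℝ) - 1) * δ < f φ} := by
        intro φ hφ
        simp only [mem_setOf_eq] at hφ ⊢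
        nlinarith
      have hgk0 : ∀ φ, 0 ≤ g k φ ∧ g k φ ≤ δ := by
        intro φ
        constructor
        · exact le_min hδ.le (le_max_left _ _)
        · exact min_le_left _ _
      -- scale
      have hsmul : g k = δ • (δ⁻¹ • g k) := by rw [smul_inv_smul₀ (ne_of_gt hδ)]
      have hΛg : Λ (g k) = δ * Λ (δ⁻¹ • g k) := by
        conv_lhs => rw [hsmul]
        rw [_root_.map_smul, smul_eq_mul]
      have hbound : Λ (δ⁻¹ • g k) ≤ lam Λ {φ | (k : ℝ) * δ ≤ f φ} := by
        refine Λ_le_lam Λ hpos (fun φ => ?_) (fun φ => ?_) (fun φ hφ => ?_)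
        · simpa using mul_nonneg (inv_nonneg.mpr hδ.le) (hgk0 φ).1
        · have := (hgk0 φ).2
          simp only [ContinuousMap.smul_apply, smul_eq_mul]
          rw [inv_mul_le_iff₀ hδ, mul_one]
          exact this
        · simp only [ContinuousMap.smul_apply, smul_eq_mul, ne_eq, mul_eq_zero, not_or] at hφ
          have hne := hφ.2
          have : 0 < max 0 (f φ - (k : ℝ) * δ) := by
            rcases lt_or_eq_of_le (le_max_left 0 (f φ - (k : ℝ) * δ)) with h | h
            · exact h
            · exact absurd (by
                show min δ (max 0 (f φ - (k : ℝ) * δ)) = 0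
                rw [← h, min_eq_right hδ.le] : g k φ = 0) hne
          have : (k : ℝ) * δ < f φ := by
            by_contra hle
            push_neg at hle
            rw [max_eq_left (by linarith)] at this
            exact lt_irrefl 0 this
          exact le_of_lt this
      have hlamle : lam Λ {φ | (k : ℝ) * δ ≤ f φ} ≤ (μ {φ | ((k : ℝ) - 1) * δ < f φ}).toReal := by
        have := ofReal_lam_le_rieszMeas Λ hpos hFclosed hUopen hFU
        rw [← hμ] at this
        exact (ENNReal.ofReal_le_iff_le_toReal (measure_ne_top μ _)).mp this
      calc Λ (g k) = δ * Λ (δ⁻¹ • g k) := hΛg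
        _ ≤ δ * (μ {φ | ((k : ℝ) - 1) * δ < f φ}).toReal := by
            exact mul_le_mul_of_nonneg_left (hbound.trans hlamle) hδ.le
    -- aggregation
    have hint_f : Integrable (fun φ => f φ) μ :=
      (map_continuous f).integrable_of_hasCompactSupport (HasCompactSupport.of_compactSpace _)
    have hA : ∀ j : ℕ, MeasurableSet {φ : K | (j : ℝ) * δ < f φ} := fun j =>
      (isOpen_lt continuous_const (map_continuous f)).measurableSet
    have hstep : ∀ j : ℕ, Λ (g (j + 1)) ≤ δ * (μ {φ : K | (j : ℝ) * δ < f φ}).toReal := by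
      intro j
      have hcast : ((j + 1 : ℕ) : ℝ) - 1 = (j : ℝ) := by push_cast; ring
      have := hgk (j + 1)
      rwa [hcast] at this
    have hind : ∀ j : ℕ, (μ {φ : K | (j : ℝ) * δ < f φ}).toReal
        = ∫ φ, Set.indicator {φ : K | (j : ℝ) * δ < f φ} (fun _ => (1 : ℝ)) φ ∂μ := by
      intro j
      rw [MeasureTheory.integral_indicator_const (1 : ℝ) (hA j), smul_eq_mul, mul_one]
      rfl
    have hint_ind : Integrable (fun φ =>
        (∑ j ∈ Finset.range ⌊‖f‖ / δ⌋₊, Set.indicator {φ : K | (j : ℝ) * δ < f φ}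
          (fun _ => (1 : ℝ)) φ)) μ :=
      integrable_finset_sum _ (fun j _ => (integrable_const (1 : ℝ)).indicator (hA j))
    have hsum_ind : ∑ j ∈ Finset.range ⌊‖f‖ / δ⌋₊, (μ {φ : K | (j : ℝ) * δ < f φ}).toReal
        = ∫ φ, (∑ j ∈ Finset.range ⌊‖f‖ / δ⌋₊, Set.indicator {φ : K | (j : ℝ) * δ < f φ}
            (fun _ => (1 : ℝ)) φ) ∂μ := by
      rw [MeasureTheory.integral_finset_sum _ (fun j _ => (integrable_const (1 : ℝ)).indicator (hA j))]
      exact Finset.sum_congr rfl fun j _ => hind j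
    have hptwise : ∀ φ : K, δ * (∑ j ∈ Finset.range ⌊‖f‖ / δ⌋₊,
        Set.indicator {φ : K | (j : ℝ) * δ < f φ} (fun _ => (1 : ℝ)) φ) ≤ f φ + δ := by
      intro φ
      have hcongr : (∑ j ∈ Finset.range ⌊‖f‖ / δ⌋₊,
          Set.indicator {φ : K | (j : ℝ) * δ < f φ} (fun _ => (1 : ℝ)) φ)
          = ∑ j ∈ Finset.range ⌊‖f‖ / δ⌋₊, (if (j : ℝ) * δ < f φ then (1 : ℝ) else 0) :=
        Finset.sum_congr rfl fun j _ => by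
          simp [Set.indicator_apply, Set.mem_setOf_eq]
      rw [hcongr]
      exact count_le hδ (hf φ) _
    have hineq2 : δ * ∑ j ∈ Finset.range ⌊‖f‖ / δ⌋₊, (μ {φ : K | (j : ℝ) * δ < f φ}).toReal
        ≤ (∫ φ, f φ ∂μ) + δ * m := by
      rw [hsum_ind, ← integral_const_mul]
      refine le_trans (integral_mono (hint_ind.const_mul δ)
        (hint_f.add (integrable_const δ)) (fun φ => hptwise φ)) ?_
      simp only [Pi.add_apply]
      rw [integral_add hint_f (integrable_const δ), integral_const, smul_eq_mul, Measure.real, ← hm]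
      linarith [mul_comm m δ]
    have hterm0 : Λ (g 0) ≤ δ * m := by
      refine (hgk 0).trans (mul_le_mul_of_nonneg_left ?_ hδ.le)
      exact ENNReal.toReal_mono (measure_ne_top μ _) (measure_mono (subset_univ _))
    calc Λ f = ∑ k ∈ Finset.range M, Λ (g k) := by rw [hf_eq, map_sum]
      _ = (∑ j ∈ Finset.range ⌊‖f‖ / δ⌋₊, Λ (g (j + 1))) + Λ (g 0) := by
          rw [hM, Finset.sum_range_succ']
      _ ≤ (∑ j ∈ Finset.range ⌊‖f‖ / δ⌋₊, δ * (μ {φ : K | (j : ℝ) * δ < f φ}).toReal) + δ * m :=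
          add_le_add (Finset.sum_le_sum fun j _ => hstep j) hterm0
      _ = δ * (∑ j ∈ Finset.range ⌊‖f‖ / δ⌋₊, (μ {φ : K | (j : ℝ) * δ < f φ}).toReal) + δ * m := by
          rw [Finset.mul_sum]
      _ ≤ ((∫ φ, f φ ∂μ) + δ * m) + δ * m := add_le_add_left hineq2 _
      _ ≤ (∫ φ, f φ ∂μ) + δ * (2 * m + 1) := by nlinarith
  -- conclude
  refine le_of_forall_pos_le_add fun ε hε => ?_
  have hδ : 0 < ε / (2 * m + 1) := div_pos hε (by linarith)
  calc Λ f ≤ (∫ φ, f φ ∂μ) + (ε / (2 * m + 1)) * (2 * m + 1) := key _ hδ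
    _ = (∫ φ, f φ ∂μ) + ε := by rw [div_mul_cancel₀]; linarith

theorem exists_riesz_measure' :
    ∃ μ : Measure K, IsFiniteMeasure μ ∧ ∀ f : C(K, ℝ), (∀ φ, 0 ≤ f φ) → Λ f ≤ ∫ φ, f φ ∂μ :=
  ⟨rieszMeas Λ hpos, rieszMeas_finite Λ hpos, fun f hf => Λ_le_integral Λ hpos f hf⟩

end Stmt5Aux


lemma dualBall_eq_polar (X : Type*) [NormedAddCommGroup X] [NormedSpace ℝ X] :
    dualBall X = WeakDual.polar ℝ (Metric.closedBall (0 : X) 1) := by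
  rw [WeakDual.polar_def]
  ext φ
  constructor
  · intro hφ x hx
    rw [Metric.mem_closedBall, dist_zero_right] at hx
    exact (hφ x).trans hx
  · intro hφ x
    rcases eq_or_ne x 0 with rfl | hx
    · simp
    · have hx' : (‖x‖⁻¹ • x) ∈ Metric.closedBall (0 : X) 1 := by
        rw [Metric.mem_closedBall, dist_zero_right, norm_smul, norm_inv, norm_norm,
          inv_mul_cancel₀ (norm_ne_zero_iff.mpr hx)]
      have h3 := hφ _ hx'
      have h2 : ‖φ (‖x‖⁻¹ • x)‖ = ‖x‖⁻¹ * ‖φ x‖ := by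
        rw [_root_.map_smul, smul_eq_mul, norm_mul, norm_inv, norm_norm]
      rw [h2, inv_mul_le_iff₀ (norm_pos_iff.mpr hx), mul_one] at h3
      exact h3

lemma isCompact_dualBall (X : Type*) [NormedAddCommGroup X] [NormedSpace ℝ X] :
    IsCompact (dualBall X) := by
  rw [dualBall_eq_polar]
  exact WeakDual.isCompact_polar ℝ (Metric.closedBall_mem_nhds 0 one_pos)

instance (X : Type*) [NormedAddCommGroup X] [NormedSpace ℝ X] :
    CompactSpace (dualBall X) := isCompact_iff_compactSpace.mp (isCompact_dualBall X)

instance (X : Type*) [NormedAddCommGroup X] [NormedSpace ℝ X] :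
    Nonempty (dualBall X) := ⟨0, fun x => by
  rw [show ((0 : WeakDual ℝ X)) x = 0 from rfl, norm_zero]; exact norm_nonneg x⟩

example (X : Type*) [NormedAddCommGroup X] [NormedSpace ℝ X] :
    T2Space (dualBall X) := inferInstance

private lemma scale_aux {p : ℝ} (hp : 1 ≤ p) {c : ℝ} (hc : 0 ≤ c) {V : Type*} [NormedAddCommGroup V]
    [NormedSpace ℝ V] (v : V) : ‖(c ^ (1 / p) : ℝ) • v‖ ^ p = c * ‖v‖ ^ p := by
  have hpne : p ≠ 0 := by intro h; rw [h] at hp; linarith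
  rw [norm_smul, Real.norm_eq_abs, abs_of_nonneg (Real.rpow_nonneg hc _),
    Real.mul_rpow (Real.rpow_nonneg hc _) (norm_nonneg v), one_div, Real.rpow_inv_rpow hc hpne]


private theorem key_ineq (p : ℝ) (hp : 1 ≤ p) (M : Set (X →L[ℝ] Y)) (C : ℝ) (hC : 0 < C)
    (h : ∀ (n : ℕ) (x : Fin n → X) (T : Fin n → X →L[ℝ] Y), (∀ i, T i ∈ M) →
      ∃ S : X →L[ℝ] Y, AbsolutelySumming p S ∧ piNorm p S ≤ C ∧
        ∀ i, ‖T i (x i)‖ ≤ ‖S (x i)‖)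
    (n : ℕ) (x : Fin n → X) (T : Fin n → X →L[ℝ] Y) (hT : ∀ i, T i ∈ M) :
    ∃ φ : dualBall X,
      ∑ i, ‖T i (x i)‖ ^ p ≤ C ^ p * ∑ i, ‖((φ : WeakDual ℝ X)) (x i)‖ ^ p := by
  have hp0 : (0:ℝ) < p := lt_of_lt_of_le one_pos hp
  have hpne : p ≠ 0 := ne_of_gt hp0
  obtain ⟨S, hSsum, hSpi, hSd⟩ := h n x T hT
  set s : ℝ := ⨆ φ : dualBall X, (∑ i, ‖((φ : WeakDual ℝ X)) (x i)‖ ^ p) ^ (1 / p) with hs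
  have hs0 : 0 ≤ s :=
    Real.iSup_nonneg fun φ => Real.rpow_nonneg
      (Finset.sum_nonneg fun i _ => Real.rpow_nonneg (norm_nonneg _) p) _
  set A₀ : ℝ := (∑ i, ‖T i (x i)‖ ^ p) ^ (1 / p) with hA₀
  have hA₀0 : 0 ≤ A₀ :=
    Real.rpow_nonneg (Finset.sum_nonneg fun i _ => Real.rpow_nonneg (norm_nonneg _) p) _
  -- A₀ ≤ (C + ε) * s for every ε > 0
  have step1 : ∀ ε : ℝ, 0 < ε → A₀ ≤ (C + ε) * s := by
    intro ε hε
    obtain ⟨C₀, hC₀0, hC₀s⟩ := hSsum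
    have hne : {c : ℝ | 0 ≤ c ∧ SummingWith p S c}.Nonempty := ⟨C₀, hC₀0, hC₀s⟩
    have hlt : piNorm p S < C + ε := lt_of_le_of_lt hSpi (lt_add_of_pos_right C hε)
    obtain ⟨c, ⟨hc0, hcs⟩, hclt⟩ := exists_lt_of_csInf_lt hne hlt
    have h1 : A₀ ≤ (∑ i, ‖S (x i)‖ ^ p) ^ (1 / p) := by
      refine Real.rpow_le_rpow (Finset.sum_nonneg fun i _ => Real.rpow_nonneg (norm_nonneg _) p)
        (Finset.sum_le_sum fun i _ => Real.rpow_le_rpow (norm_nonneg _) (hSd i) hp0.le)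
        (by positivity)
    have h2 := hcs n x
    calc A₀ ≤ c * s := h1.trans h2
      _ ≤ (C + ε) * s := mul_le_mul_of_nonneg_right hclt.le hs0
  have step2 : A₀ ≤ C * s := by
    refine le_of_forall_pos_le_add fun ε hε => ?_
    have hδ : 0 < ε / (s + 1) := div_pos hε (by linarith)
    calc A₀ ≤ (C + ε / (s + 1)) * s := step1 _ hδ
      _ = C * s + (ε / (s + 1)) * s := by ring
      _ ≤ C * s + ε := by
          have : (ε / (s + 1)) * s ≤ ε := by
            rw [div_mul_eq_mul_div, div_le_iff₀ (by linarith : (0:ℝ) < s + 1)]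
            nlinarith
          linarith
  -- maximize
  set F : dualBall X → ℝ := fun φ => ∑ i, ‖((φ : WeakDual ℝ X)) (x i)‖ ^ p with hF
  have hFcont : Continuous F := by
    refine continuous_finset_sum _ fun i _ => ?_
    have h1 : Continuous fun φ : dualBall X => ((φ : WeakDual ℝ X)) (x i) :=
      (WeakDual.eval_continuous (x i)).comp continuous_subtype_val
    exact h1.norm.rpow_const fun φ => Or.inr hp0.le
  have hF0 : ∀ φ, 0 ≤ F φ := fun φ =>
    Finset.sum_nonneg fun i _ => Real.rpow_nonneg (norm_nonneg _) p
  obtain ⟨φ₀, -, hφ₀⟩ := isCompact_univ.exists_isMaxOn univ_nonempty hFcont.continuousOn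
  have hsval : s = (F φ₀) ^ (1 / p) := by
    refine le_antisymm (ciSup_le fun φ => ?_) ?_
    · exact Real.rpow_le_rpow (hF0 φ) (hφ₀ (mem_univ φ)) (by positivity)
    · rw [hs]
      refine le_ciSup (f := fun φ : dualBall X =>
        (∑ i, ‖((φ : WeakDual ℝ X)) (x i)‖ ^ p) ^ (1 / p)) ⟨(F φ₀) ^ (1 / p), ?_⟩ φ₀
      rintro r ⟨φ, rfl⟩
      exact Real.rpow_le_rpow (hF0 φ) (hφ₀ (mem_univ φ)) (by positivity)
  refine ⟨φ₀, ?_⟩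
  have h3 : A₀ ^ p ≤ (C * (F φ₀) ^ (1 / p)) ^ p := by
    refine Real.rpow_le_rpow hA₀0 ?_ hp0.le
    rw [← hsval]; exact step2
  have e1 : A₀ ^ p = ∑ i, ‖T i (x i)‖ ^ p := by
    rw [hA₀, one_div, Real.rpow_inv_rpow (Finset.sum_nonneg fun i _ =>
      Real.rpow_nonneg (norm_nonneg _) p) hpne]
  have e2 : (C * (F φ₀) ^ (1 / p)) ^ p = C ^ p * F φ₀ := by
    rw [Real.mul_rpow hC.le (Real.rpow_nonneg (hF0 φ₀) _), one_div,
      Real.rpow_inv_rpow (hF0 φ₀) hpne]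
  rw [e1, e2] at h3
  exact h3

theorem stmt5 (p : ℝ) (hp : 1 ≤ p) (M : Set (X →L[ℝ] Y)) (C : ℝ) (hC : 0 < C)
    (h : ∀ (n : ℕ) (x : Fin n → X) (T : Fin n → X →L[ℝ] Y), (∀ i, T i ∈ M) →
      ∃ S : X →L[ℝ] Y, AbsolutelySumming p S ∧ piNorm p S ≤ C ∧
        ∀ i, ‖T i (x i)‖ ≤ ‖S (x i)‖) :
    ∃ μ : Measure (dualBall X), IsFiniteMeasure μ ∧ UniformlyDominatedBy p M μ := by
  have hp0 : (0:ℝ) < p := lt_of_lt_of_le one_pos hp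
  have hCp : (0:ℝ) < C ^ p := Real.rpow_pos_of_pos hC p
  -- the cone A
  set A : Set C(↥(dualBall X), ℝ) := {f | ∃ (n : ℕ) (x : Fin n → X) (T : Fin n → X →L[ℝ] Y),
    (∀ i, T i ∈ M) ∧ ∀ φ : ↥(dualBall X),
      f φ = ∑ i, (‖T i (x i)‖ ^ p - C ^ p * ‖((φ : WeakDual ℝ X)) (x i)‖ ^ p)} with hAdef
  have hzero : (0 : C(↥(dualBall X), ℝ)) ∈ A :=
    ⟨0, Fin.elim0, Fin.elim0, fun i => i.elim0, fun φ => by simp⟩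
  have hadd : ∀ f ∈ A, ∀ g ∈ A, f + g ∈ A := by
    rintro f ⟨n, x, T, hT, hf⟩ g ⟨n', x', T', hT', hg⟩
    refine ⟨n + n', Fin.append x x', Fin.append T T', ?_, fun φ => ?_⟩
    · intro i
      refine Fin.addCases (fun j => ?_) (fun j => ?_) i
      · rw [Fin.append_left]; exact hT j
      · rw [Fin.append_right]; exact hT' j
    · rw [ContinuousMap.add_apply, hf φ, hg φ, Fin.sum_univ_add]
      congr 1
      · exact Finset.sum_congr rfl fun j _ => by rw [Fin.append_left, Fin.append_left]
      · exact Finset.sum_congr rfl fun j _ => by rw [Fin.append_right, Fin.append_right]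
  have hsmul : ∀ (c : ℝ), 0 ≤ c → ∀ f ∈ A, c • f ∈ A := by
    rintro c hc f ⟨n, x, T, hT, hf⟩
    refine ⟨n, fun i => (c ^ (1 / p) : ℝ) • x i, T, hT, fun φ => ?_⟩
    rw [ContinuousMap.smul_apply, hf φ, smul_eq_mul, Finset.mul_sum]
    refine Finset.sum_congr rfl fun i _ => ?_
    rw [ContinuousLinearMap.map_smul, scale_aux hp hc]
    have : ((φ : WeakDual ℝ X)) ((c ^ (1 / p) : ℝ) • x i)
        = (c ^ (1 / p) : ℝ) • ((φ : WeakDual ℝ X)) (x i) := ContinuousLinearMap.map_smul _ _ _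
    rw [this, scale_aux hp hc]
    ring
  have hconv : Convex ℝ A := by
    intro f hf g hg a b ha hb hab
    simpa using hadd _ (hsmul a ha f hf) _ (hsmul b hb g hg)
  -- the open convex set B
  set B : Set C(↥(dualBall X), ℝ) := {f | ∀ φ, 0 < f φ} with hBdef
  have hBconv : Convex ℝ B := by
    intro f hf g hg a b ha hb hab
    intro φ
    have h1 : (a • f + b • g) φ = a * f φ + b * g φ := by
      simp [ContinuousMap.add_apply, ContinuousMap.smul_apply, smul_eq_mul]
    rw [h1]
    rcases eq_or_lt_of_le ha with rfl | ha'
    · have hb1 : b = 1 := by linarith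
      rw [hb1]; simpa using hg φ
    · nlinarith [hf φ, (hg φ).le, mul_nonneg hb (hg φ).le, mul_pos ha' (hf φ)]
  have hBopen : IsOpen B := by
    rw [Metric.isOpen_iff]
    intro f hf
    obtain ⟨φm, -, hφm⟩ := isCompact_univ.exists_isMinOn univ_nonempty
      ((map_continuous f).continuousOn)
    refine ⟨f φm, hf φm, fun g hg => ?_⟩
    intro φ
    have h1 : |g φ - f φ| ≤ ‖g - f‖ := by
      have := ContinuousMap.norm_coe_le_norm (g - f) φ
      simpa [Real.norm_eq_abs] using this
    have h2 : ‖g - f‖ < f φm := by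
      rw [← dist_eq_norm]; exact Metric.mem_ball.mp hg
    have h3 : f φm ≤ f φ := hφm (mem_univ φ)
    have := abs_lt.mp (lt_of_le_of_lt h1 h2)
    linarith [this.1]
  -- disjointness
  have hdisj : Disjoint B A := by
    rw [Set.disjoint_right]
    rintro f ⟨n, x, T, hT, hf⟩ hfB
    obtain ⟨φ₀, hφ₀⟩ := key_ineq p hp M C hC h n x T hT
    have : f φ₀ ≤ 0 := by
      rw [hf φ₀, Finset.sum_sub_distrib, ← Finset.mul_sum]
      linarith
    exact absurd (hfB φ₀) (not_lt.mpr this)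
  obtain ⟨L, u, hLB, hLA⟩ := geometric_hahn_banach_open hBconv hBopen hconv hdisj
  have hu0 : u ≤ 0 := by simpa using hLA 0 hzero
  have hone : (1 : C(↥(dualBall X), ℝ)) ∈ B := fun φ => by simp
  have hL1 : L 1 < 0 := lt_of_lt_of_le (hLB 1 hone) hu0
  have hLA' : ∀ f ∈ A, 0 ≤ L f := by
    intro f hf
    by_contra hneg
    push_neg at hneg
    have ht0 : 0 < u / L f + 1 := by
      have : 0 ≤ u / L f := div_nonneg_of_nonpos hu0 hneg.le
      linarith
    have hmem := hsmul _ ht0.le f hf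
    have h2 := hLA _ hmem
    rw [ContinuousLinearMap.map_smul, smul_eq_mul, add_mul,
      div_mul_cancel₀ _ (ne_of_lt hneg), one_mul] at h2
    linarith
  have hLpos : ∀ f : C(↥(dualBall X), ℝ), (∀ φ, 0 ≤ f φ) → L f ≤ 0 := by
    intro f hf
    have hstep : ∀ ε : ℝ, 0 < ε → L f < ε * (-L 1) := by
      intro ε hε
      have hmem : f + ε • 1 ∈ B := fun φ => by
        have := hf φ
        simp only [ContinuousMap.add_apply, ContinuousMap.smul_apply, ContinuousMap.one_apply,
          smul_eq_mul, mul_one]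
        linarith
      have := lt_of_lt_of_le (hLB _ hmem) hu0
      rw [map_add, ContinuousLinearMap.map_smul, smul_eq_mul] at this
      nlinarith [this]
    refine le_of_forall_pos_le_add fun ε hε => ?_
    have hδ : 0 < ε / (-L 1) := div_pos hε (by linarith)
    have := hstep _ hδ
    rw [div_mul_cancel₀ _ (by linarith : -L 1 ≠ 0)] at this
    linarith
  -- the positive functional Λ = -L
  set Λ : C(↥(dualBall X), ℝ) →ₗ[ℝ] ℝ := (-L : C(↥(dualBall X), ℝ) →L[ℝ] ℝ).toLinearMap
    with hΛdef
  have hΛ : ∀ f, Λ f = -(L f) := fun f => rfl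
  have hΛpos : ∀ f : C(↥(dualBall X), ℝ), (∀ φ, 0 ≤ f φ) → 0 ≤ Λ f := by
    intro f hf; rw [hΛ]; linarith [hLpos f hf]
  have hΛ1 : 0 < Λ 1 := by rw [hΛ]; linarith
  obtain ⟨μ₀, hμ₀fin, hμ₀⟩ := Stmt5Aux.exists_riesz_measure' Λ hΛpos
  -- the final measure
  refine ⟨ENNReal.ofReal (C ^ p / Λ 1) • μ₀, ?_, ?_⟩
  · refine ⟨?_⟩
    rw [Measure.smul_apply, smul_eq_mul]
    exact ENNReal.mul_lt_top ENNReal.ofReal_lt_top (measure_lt_top μ₀ _)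
  · intro T hT x
    -- the test function
    have hgc : Continuous fun φ : ↥(dualBall X) => ‖((φ : WeakDual ℝ X)) x‖ ^ p :=
      (((WeakDual.eval_continuous x).comp continuous_subtype_val).norm).rpow_const
        fun φ => Or.inr hp0.le
    set gx : C(↥(dualBall X), ℝ) := ⟨fun φ => ‖((φ : WeakDual ℝ X)) x‖ ^ p, hgc⟩ with hgx
    set f0 : C(↥(dualBall X), ℝ) := (‖T x‖ ^ p) • 1 - (C ^ p) • gx with hf0
    have hf0A : f0 ∈ A := by
      refine ⟨1, fun _ => x, fun _ => T, fun _ => hT, fun φ => ?_⟩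
      simp only [hf0, ContinuousMap.sub_apply, ContinuousMap.smul_apply,
        ContinuousMap.one_apply, smul_eq_mul, mul_one, Fin.sum_univ_one]
      rfl
    have h1 : Λ f0 ≤ 0 := by rw [hΛ]; linarith [hLA' f0 hf0A]
    have h2 : Λ f0 = ‖T x‖ ^ p * Λ 1 - C ^ p * Λ gx := by
      rw [hf0, map_sub, LinearMap.map_smul, LinearMap.map_smul, smul_eq_mul, smul_eq_mul]
    have h3 : Λ gx ≤ ∫ φ, gx φ ∂μ₀ :=
      hμ₀ gx fun φ => Real.rpow_nonneg (norm_nonneg _) p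
    have h4 : ‖T x‖ ^ p * Λ 1 ≤ C ^ p * ∫ φ, gx φ ∂μ₀ := by
      have : C ^ p * Λ gx ≤ C ^ p * ∫ φ, gx φ ∂μ₀ :=
        mul_le_mul_of_nonneg_left h3 hCp.le
      linarith
    have h5 : ‖T x‖ ^ p ≤ (C ^ p / Λ 1) * ∫ φ, gx φ ∂μ₀ := by
      rw [div_mul_eq_mul_div, le_div_iff₀ hΛ1]
      linarith
    calc ‖T x‖ ^ p ≤ (C ^ p / Λ 1) * ∫ φ, gx φ ∂μ₀ := h5
      _ = ∫ φ : ↥(dualBall X), ‖((φ : WeakDual ℝ X)) x‖ ^ p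
          ∂(ENNReal.ofReal (C ^ p / Λ 1) • μ₀) := by
        rw [integral_smul_measure, ENNReal.toReal_ofReal (le_of_lt (div_pos hCp hΛ1)),
          smul_eq_mul]
        rfl
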